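/- Let G be a birth-death chain: X = ℕ₀ with x ∼ y iff |x−y| = 1, edge weights b(k,k+1) > 0 and measure m. For j < k define κ(j,k) = (1/(k−j)) · ((b(j,j+1) − b(j,j−1))/m(j) − (b(k,k+1) − b(k,k−1))/m(k)) (with b(0,−1) = 0). Then κ(j,k) = inf{ ∇_{jk} ℒf : f ∈ Lip(1), ∇_{jk} f = 1 }, where ∇_{jk} f = (f(j) − f(k))/(k−j) and Lip(1) is with respect to the distance |j−k|. -/

import Mathlib

/-- The Laplacian of a birth-death chain on ℕ with edge weights `β k = b(k, k+1)`
and measure `m`. -/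
noncomputable def bdLap (β m : ℕ → ℝ) (f : ℕ → ℝ) (k : ℕ) : ℝ :=
  (1 / m k) * (β k * (f k - f (k + 1)) +
    (if k = 0 then 0 else β (k - 1) * (f k - f (k - 1))))

/-- 1-Lipschitz with respect to the distance `|j − k|` on ℕ. -/
def BdLip1 (f : ℕ → ℝ) : Prop := ∀ j k : ℕ, |f j - f k| ≤ |(j : ℝ) - (k : ℝ)|

/-- Ollivier Ricci curvature of a birth-death chain via the dual formula. -/
noncomputable def bdKappa (β m : ℕ → ℝ) (j k : ℕ) : ℝ :=
  sInf {t : ℝ | ∃ f : ℕ → ℝ, BdLip1 f ∧ (f j - f k) / ((k : ℝ) - (j : ℝ)) = 1 ∧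
    t = (bdLap β m f j - bdLap β m f k) / ((k : ℝ) - (j : ℝ))}

lemma bd_step (f : ℕ → ℝ) (hL : BdLip1 f) (j k : ℕ) (hjk : j < k)
    (hfk : f j - f k = (k : ℝ) - (j : ℝ)) :
    ∀ i, j ≤ i → i < k → f i - f (i + 1) = 1 := by
  intro i hji hik
  have h1 : f j - f i ≤ (i : ℝ) - (j : ℝ) := by
    have h := (abs_le.mp (hL j i)).2
    have : |(j : ℝ) - (i : ℝ)| = (i : ℝ) - (j : ℝ) := by
      rw [abs_sub_comm]
      exact abs_of_nonneg (sub_nonneg.mpr (Nat.cast_le.mpr hji))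
    linarith [le_abs_self (f j - f i), this ▸ hL j i]
  have h2 : f (i + 1) - f k ≤ (k : ℝ) - ((i : ℝ) + 1) := by
    have hik' : (i : ℝ) + 1 ≤ (k : ℝ) := by exact_mod_cast hik
    have : |((i + 1 : ℕ) : ℝ) - (k : ℝ)| = (k : ℝ) - ((i : ℝ) + 1) := by
      push_cast
      rw [abs_sub_comm]
      exact abs_of_nonneg (by linarith)
    linarith [le_abs_self (f (i + 1) - f k), this ▸ hL (i + 1) k]
  have h3 : f i - f (i + 1) ≤ 1 := by
    have : |(i : ℝ) - ((i + 1 : ℕ) : ℝ)| = 1 := by push_cast; simp [abs_sub_comm]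
    linarith [le_abs_self (f i - f (i + 1)), this ▸ hL i (i + 1)]
  linarith

/-- The explicit formula for the Ollivier Ricci curvature of a birth-death chain:
`κ(j,k) = (1/(k−j)) ((b(j,j+1)−b(j,j−1))/m(j) − (b(k,k+1)−b(k,k−1))/m(k))`. -/
theorem bdKappa_formula (β m : ℕ → ℝ) (hβ : ∀ k, 0 < β k) (hm : ∀ k, 0 < m k)
    (j k : ℕ) (hjk : j < k) :
    bdKappa β m j k = (1 / ((k : ℝ) - (j : ℝ))) *
      ((β j - (if j = 0 then 0 else β (j - 1))) / m j - (β k - β (k - 1)) / m k) := by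
  have hk0 : k ≠ 0 := by omega
  have hd : (0 : ℝ) < (k : ℝ) - (j : ℝ) := by
    have : (j : ℝ) < (k : ℝ) := by exact_mod_cast hjk
    linarith
  set A : ℝ := (β j - (if j = 0 then 0 else β (j - 1))) / m j with hA
  set B : ℝ := (β k - β (k - 1)) / m k with hB
  have hmem : ∀ f : ℕ → ℝ, BdLip1 f → f j - f k = (k : ℝ) - (j : ℝ) →
      A ≤ bdLap β m f j ∧ bdLap β m f k ≤ B := by
    intro f hL hfk
    have hj1 : f j - f (j + 1) = 1 := bd_step f hL j k hjk hfk j le_rfl hjk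
    have hk1 : f (k - 1) - f ((k - 1) + 1) = 1 :=
      bd_step f hL j k hjk hfk (k - 1) (by omega) (by omega)
    have hk1' : f k - f (k - 1) = -1 := by
      have : (k - 1) + 1 = k := by omega
      rw [this] at hk1; linarith
    constructor
    · rw [bdLap, hj1]
      by_cases hj : j = 0
      · simp [hA, hj, div_eq_mul_inv, mul_comm]
      · simp only [hj, if_false, hA]
        rw [div_eq_inv_mul, ← one_div]
        have h1 : -1 ≤ f j - f (j - 1) := by
          have hb := hL j (j - 1)
          have hcast : |(j : ℝ) - ((j - 1 : ℕ) : ℝ)| = 1 := by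
            rw [Nat.cast_sub (by omega)]
            simp
          rw [hcast] at hb
          linarith [neg_abs_le (f j - f (j - 1))]
        have h2 : β (j - 1) * (-1) ≤ β (j - 1) * (f j - f (j - 1)) :=
          mul_le_mul_of_nonneg_left h1 (hβ (j - 1)).le
        exact mul_le_mul_of_nonneg_left (by linarith)
          (one_div_pos.mpr (hm j)).le
    · rw [bdLap, hk1']
      simp only [hk0, if_false, hB]
      rw [div_eq_inv_mul, ← one_div]
      have h1 : f k - f (k + 1) ≤ 1 := by
        have hb := hL k (k + 1)
        have hcast : |(k : ℝ) - ((k + 1 : ℕ) : ℝ)| = 1 := by push_cast; simp [abs_sub_comm]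
        rw [hcast] at hb
        linarith [le_abs_self (f k - f (k + 1))]
      have h2 : β k * (f k - f (k + 1)) ≤ β k * 1 :=
        mul_le_mul_of_nonneg_left h1 (hβ k).le
      have heq : (β k - β (k - 1)) / m k = 1 / m k * 1 * (β k - β (k - 1)) := by ring
      rw [heq]
      exact mul_le_mul_of_nonneg_left (by linarith)
        (mul_pos (one_div_pos.mpr (hm k)) one_pos).le
  have hAB : (1 / ((k : ℝ) - (j : ℝ))) * (A - B) = (A - B) / ((k : ℝ) - (j : ℝ)) :=
    one_div_mul_eq_div _ _
  rw [bdKappa, hAB]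
  apply IsLeast.csInf_eq
  constructor
  · -- membership: witness g i = j - i
    refine ⟨fun i => (j : ℝ) - (i : ℝ), ?_, ?_, ?_⟩
    · intro a b
      have : ((j : ℝ) - a) - ((j : ℝ) - b) = -(( a : ℝ) - b) := by ring
      rw [this, abs_neg]
    · field_simp; ring
    · have g1 : ((j : ℝ) - (j : ℝ)) - ((j : ℝ) - ((j + 1 : ℕ) : ℝ)) = 1 := by
        push_cast; ring
      have gk : ((j : ℝ) - (k : ℝ)) - ((j : ℝ) - ((k + 1 : ℕ) : ℝ)) = 1 := by
        push_cast; ring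
      have gk' : ((j : ℝ) - (k : ℝ)) - ((j : ℝ) - ((k - 1 : ℕ) : ℝ)) = -1 := by
        rw [Nat.cast_sub (by omega)]; ring
      rw [bdLap, bdLap, g1, gk, gk']
      simp only [hk0, if_false]
      by_cases hj : j = 0
      · have gj' : (0 : ℝ) = 0 := rfl
        simp only [hj, if_true]
        rw [hA, hB]
        simp only [hj, if_true]
        ring
      · have gj' : ((j : ℝ) - (j : ℝ)) - ((j : ℝ) - ((j - 1 : ℕ) : ℝ)) = -1 := by
          rw [Nat.cast_sub (by omega)]; ring
        rw [gj']
        simp only [hj, if_false]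
        rw [hA, hB]
        simp only [hj, if_false]
        ring_nf
  · intro t ht
    obtain ⟨f, hL, hnab, rfl⟩ := ht
    have hfk : f j - f k = (k : ℝ) - (j : ℝ) := by
      field_simp at hnab
      linarith
    obtain ⟨hAle, hBle⟩ := hmem f hL hfk
    exact (div_le_div_iff_of_pos_right hd).mpr (by linarith)
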